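/- Let X be a topological space with basepoint x₀. Then π₁^Span(X,x₀), the fundamental group with the Spanier subgroup topology, is discrete if and only if there exists an open cover 𝒰 of X such that the Spanier subgroup π(𝒰,x₀) is trivial (i.e., if and only if X is unbased semilocally simply connected). -/

import Mathlib

open TopologicalSpace
open scoped Topology Pointwise

attribute [local instance] Path.Homotopic.setoid

/-- The collection of all left cosets `g • H` of members of a family of subgroups. -/
def leftCosets {G : Type*} [Group G] (Sig : Set (Subgroup G)) : Set (Set G) :=
  {s | ∃ g : G, ∃ H ∈ Sig, s = g • (H : Set G)}

/-- A neighbourhood family on a group `G`: a (nonempty) collection of subgroups such that any two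
members contain a common member. -/
def IsNbhdFamily {G : Type*} [Group G] (Sig : Set (Subgroup G)) : Prop :=
  Sig.Nonempty ∧ ∀ H ∈ Sig, ∀ K ∈ Sig, ∃ S ∈ Sig, S ≤ H ⊓ K

/-- The subgroup topology on `G` determined by the family `Sig`: the topology generated by all
left cosets of members of `Sig`. -/
def subgroupTopology {G : Type*} [Group G] (Sig : Set (Subgroup G)) : TopologicalSpace G :=
  generateFrom (leftCosets Sig)

variable {X : Type*} [TopologicalSpace X]

/-- The homotopy class of a loop, as an element of the fundamental group. -/
noncomputable def fgClass {x₀ : X} (γ : Path x₀ x₀) : FundamentalGroup X x₀ :=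
  ⟦γ⟧

/-- An open cover of the space `X`. -/
def IsOpenCover (U : Set (Set X)) : Prop :=
  (∀ u ∈ U, IsOpen u) ∧ ⋃₀ U = Set.univ

/-- The Spanier subgroup `π(𝒰, x₀)` of the fundamental group determined by an open cover `𝒰`:
the subgroup generated by all classes `[α * β * α⁻¹]` with `α` a path starting at `x₀` and `β`
a loop at `α(1)` lying in some member of `𝒰`. -/
noncomputable def spanierSubgroup (U : Set (Set X)) (x₀ : X) :
    Subgroup (FundamentalGroup X x₀) :=
  Subgroup.closure
    {g | ∃ (x : X) (α : Path x₀ x) (β : Path x x) (u : Set X), u ∈ U ∧ Set.range β ⊆ u ∧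
      g = fgClass ((α.trans β).trans α.symm)}

/-- The collection of all Spanier subgroups of `π₁(X, x₀)`. -/
def spanierFamily (x₀ : X) : Set (Subgroup (FundamentalGroup X x₀)) :=
  {H | ∃ U : Set (Set X), IsOpenCover U ∧ H = spanierSubgroup U x₀}

/-- A path open cover of `(X, x₀)`: a family of open sets `V x α`, indexed by the paths `α` in
`X` from `x₀` to `x`, with `α(1) ∈ V x α`. -/
def IsPathOpenCover (x₀ : X) (V : (x : X) → Path x₀ x → Set X) : Prop :=
  ∀ (x : X) (α : Path x₀ x), IsOpen (V x α) ∧ α 1 ∈ V x α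

/-- The path Spanier subgroup `π̃(𝒱, x₀)` determined by a path open cover `𝒱`: the subgroup
generated by all classes `[α * β * α⁻¹]` with `α` a path starting at `x₀` and `β` a loop at
`α(1)` lying in `V_α`. -/
noncomputable def pathSpanierSubgroup (x₀ : X) (V : (x : X) → Path x₀ x → Set X) :
    Subgroup (FundamentalGroup X x₀) :=
  Subgroup.closure
    {g | ∃ (x : X) (α : Path x₀ x) (β : Path x x), Set.range β ⊆ V x α ∧
      g = fgClass ((α.trans β).trans α.symm)}

/-- The collection of all path Spanier subgroups of `π₁(X, x₀)`. -/
def pathSpanierFamily (x₀ : X) : Set (Subgroup (FundamentalGroup X x₀)) :=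
  {H | ∃ V : (x : X) → Path x₀ x → Set X, IsPathOpenCover x₀ V ∧ H = pathSpanierSubgroup x₀ V}


open TopologicalSpace in
lemma exists_coset_subset {G : Type*} [Group G] {Sig : Set (Subgroup G)}
    (hne : Sig.Nonempty) (hdir : ∀ H ∈ Sig, ∀ K ∈ Sig, ∃ S ∈ Sig, S ≤ H ⊓ K)
    {s : Set G} (hs : GenerateOpen (leftCosets Sig) s) :
    ∀ g ∈ s, ∃ H ∈ Sig, g • (H : Set G) ⊆ s := by
  induction hs with
  | basic t ht =>
    rintro g hg
    obtain ⟨g', H, hH, rfl⟩ := ht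
    refine ⟨H, hH, ?_⟩
    have hmem : g'⁻¹ * g ∈ H := (mem_leftCoset_iff g').1 hg
    have : g • (H : Set G) = g' • (H : Set G) := by
      rw [leftCoset_eq_iff]
      simpa using H.inv_mem hmem
    rw [this]
  | univ =>
    rintro g -
    obtain ⟨H, hH⟩ := hne
    exact ⟨H, hH, Set.subset_univ _⟩
  | inter u v _ _ ihu ihv =>
    rintro g ⟨hgu, hgv⟩
    obtain ⟨H, hH, hHu⟩ := ihu g hgu
    obtain ⟨K, hK, hKv⟩ := ihv g hgv
    obtain ⟨S, hS, hle⟩ := hdir H hH K hK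
    refine ⟨S, hS, fun x hx => ⟨?_, ?_⟩⟩
    · exact hHu (Set.smul_set_mono (fun y hy => (hle.trans inf_le_left) hy) hx)
    · exact hKv (Set.smul_set_mono (fun y hy => (hle.trans inf_le_right) hy) hx)
  | sUnion T _ ih =>
    rintro g ⟨t, htT, hgt⟩
    obtain ⟨H, hH, h⟩ := ih t htT g hgt
    exact ⟨H, hH, h.trans (Set.subset_sUnion_of_mem htT)⟩

lemma spanierFamily_nonempty (x₀ : X) : (spanierFamily x₀).Nonempty := by
  refine ⟨spanierSubgroup {Set.univ} x₀, {Set.univ}, ⟨?_, ?_⟩, rfl⟩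
  · rintro u rfl; exact isOpen_univ
  · simp

lemma spanierSubgroup_mono {U W : Set (Set X)} (x₀ : X)
    (h : ∀ w ∈ W, ∃ u ∈ U, w ⊆ u) :
    spanierSubgroup W x₀ ≤ spanierSubgroup U x₀ := by
  apply Subgroup.closure_mono
  rintro g ⟨x, α, β, w, hwW, hβ, rfl⟩
  obtain ⟨u, huU, hwu⟩ := h w hwW
  exact ⟨x, α, β, u, huU, hβ.trans hwu, rfl⟩

lemma spanierFamily_directed (x₀ : X) :
    ∀ H ∈ spanierFamily x₀, ∀ K ∈ spanierFamily x₀,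
      ∃ S ∈ spanierFamily x₀, S ≤ H ⊓ K := by
  rintro H ⟨U, hU, rfl⟩ K ⟨U', hU', rfl⟩
  refine ⟨spanierSubgroup (Set.image2 (· ∩ ·) U U') x₀,
    ⟨Set.image2 (· ∩ ·) U U', ⟨?_, ?_⟩, rfl⟩, le_inf ?_ ?_⟩
  · rintro w ⟨u, hu, v, hv, rfl⟩
    exact (hU.1 u hu).inter (hU'.1 v hv)
  · apply Set.eq_univ_of_forall
    intro x
    have hx : x ∈ ⋃₀ U := hU.2 ▸ Set.mem_univ x
    have hx' : x ∈ ⋃₀ U' := hU'.2 ▸ Set.mem_univ x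
    obtain ⟨u, hu, hxu⟩ := hx
    obtain ⟨v, hv, hxv⟩ := hx'
    exact ⟨u ∩ v, Set.mem_image2_of_mem hu hv, hxu, hxv⟩
  · apply spanierSubgroup_mono x₀
    rintro w ⟨u, hu, v, hv, rfl⟩
    exact ⟨u, hu, Set.inter_subset_left⟩
  · apply spanierSubgroup_mono x₀
    rintro w ⟨u, hu, v, hv, rfl⟩
    exact ⟨v, hv, Set.inter_subset_right⟩

/-- the Spanier subgroup topology on `π₁(X, x₀)` is discrete iff there is an open
cover of `X` with trivial Spanier subgroup (i.e. iff `X` is unbased semilocally simply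
connected). -/
theorem statement13 (x₀ : X) :
    subgroupTopology (spanierFamily x₀) = ⊥ ↔
      ∃ U : Set (Set X), IsOpenCover U ∧ spanierSubgroup U x₀ = ⊥ := by
  constructor
  · intro h
    have h1 : IsOpen[subgroupTopology (spanierFamily x₀)]
        ({1} : Set (FundamentalGroup X x₀)) := by
      rw [h]
      exact @isOpen_discrete _ ⊥ (discreteTopology_bot _) {1}
    obtain ⟨H, hHmem, hHsub⟩ :=
      exists_coset_subset (spanierFamily_nonempty x₀) (spanierFamily_directed x₀)
        h1 1 rfl
    obtain ⟨U, hU, rfl⟩ := hHmem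
    refine ⟨U, hU, ?_⟩
    rw [eq_bot_iff]
    intro g hg
    have : g ∈ ((1 : FundamentalGroup X x₀) • (spanierSubgroup U x₀ : Set _)) := by
      simpa only [one_smul, SetLike.mem_coe] using hg
    simpa using hHsub this
  · rintro ⟨U, hU, hbot⟩
    apply eq_bot_of_singletons_open
    intro g
    apply TopologicalSpace.GenerateOpen.basic
    refine ⟨g, spanierSubgroup U x₀, ⟨U, hU, rfl⟩, ?_⟩
    rw [hbot]
    ext x
    simp [Set.mem_smul_set_iff_inv_smul_mem, eq_comm, smul_eq_mul,
      inv_mul_eq_one]
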